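/- Let w = ωtr with 0 ≤ w ≤ tr integers. For any s ∈ F_2^r, the number N_w of vectors x ∈ F_2^{tr} of Hamming weight exactly w satisfying x H_{tr}^T = s is at most √(2tr) · ((1 + |1-2ω|^t)/2)^r · C(tr, w), where H_{tr} is the concatenation of t copies of the r×r identity matrix. -/

import Mathlib

open Finset

/-- Hamming weight of a vector of `F_2^{tr}` written as `t` blocks of length `r`. -/
def blockWeight {t r : ℕ} (x : Fin t → Fin r → ZMod 2) : ℕ :=
  (Finset.univ.filter (fun q : Fin t × Fin r => x q.1 q.2 ≠ 0)).card

/-- Syndrome with respect to `H_{tr} = [I_r | I_r | ⋯ | I_r]` (`t` copies of `I_r`). -/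
def blockSyndrome {t r : ℕ} (x : Fin t → Fin r → ZMod 2) : Fin r → ZMod 2 :=
  fun i => ∑ k : Fin t, x k i


section StirlingPart
open Real Stirling Filter Topology Nat

lemma sqrtpi_le (n : ℕ) : √π ≤ stirlingSeq (n+1) := by
  have ht : Filter.Tendsto (stirlingSeq ∘ Nat.succ) atTop (𝓝 (√π)) :=
    tendsto_stirlingSeq_sqrt_pi.comp (tendsto_add_atTop_nat 1)
  exact Stirling.stirlingSeq'_antitone.le_of_tendsto ht n

lemma stirling_two : stirlingSeq 2 = exp 1 ^ 2 / 4 := by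
  have : √(2*(2:ℕ) : ℝ) = 2 := by
    norm_num
  rw [stirlingSeq, this]
  have he : (0:ℝ) < exp 1 := exp_pos 1
  field_simp
  ring

lemma stirling_le (n : ℕ) (hn : 2 ≤ n) : stirlingSeq n ≤ exp 1 ^ 2 / 4 := by
  rw [← stirling_two]
  obtain ⟨m, rfl⟩ : ∃ m, n = m + 1 := ⟨n-1, by omega⟩
  exact Stirling.stirlingSeq'_antitone (by omega : 1 ≤ m)

lemma fact_lb (n : ℕ) (hn : 1 ≤ n) :
    √π * (√(2*n) * ((n:ℝ)/exp 1)^n) ≤ n ! := by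
  have hD : (0:ℝ) < √(2*n) * ((n:ℝ)/exp 1)^n := by
    have : (0:ℝ) < n := by exact_mod_cast hn
    positivity
  have h := sqrtpi_le (n-1)
  rw [show n - 1 + 1 = n by omega, stirlingSeq, le_div_iff₀ hD] at h
  linarith

lemma fact_ub (n : ℕ) (hn : 2 ≤ n) :
    (n ! : ℝ) ≤ exp 1 ^ 2 / 4 * (√(2*n) * ((n:ℝ)/exp 1)^n) := by
  have hD : (0:ℝ) < √(2*n) * ((n:ℝ)/exp 1)^n := by
    have : (0:ℝ) < n := by exact_mod_cast (by omega : 0 < n)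
    positivity
  have h := stirling_le n hn
  rw [stirlingSeq, div_le_iff₀ hD] at h
  linarith


lemma e4_le : exp 1 ^ 4 ≤ 32 * √π := by
  have h9 : exp 1 < 2.7182818286 := Real.exp_one_lt_d9
  have hp : (3.14 : ℝ) ≤ π := by linarith [Real.pi_gt_d2]
  have he : (0:ℝ) < exp 1 := exp_pos 1
  have h1 : exp 1 ^ 4 ≤ 2.7182818286 ^ 4 := by
    apply pow_le_pow_left₀ he.le h9.le
  have h2 : (2.7182818286 : ℝ) ^ 4 ≤ 32 * √3.14 := by
    rw [show (2.7182818286:ℝ)^4 = 32 * (2.7182818286^4/32) by ring]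
    apply mul_le_mul_of_nonneg_left _ (by norm_num)
    rw [Real.le_sqrt (by norm_num)]
    · norm_num
    · norm_num
  have h3 : √(3.14:ℝ) ≤ √π := Real.sqrt_le_sqrt hp
  linarith

lemma key (n a b : ℕ) (hab : a + b = n) (ha : 2 ≤ a) (hb : 2 ≤ b) :
    ((n:ℝ))^n ≤ (n.choose a) * (a:ℝ)^a * (b:ℝ)^b * √(2*(n:ℝ)) := by
  have hC : ((n.choose a : ℝ)) = n ! / (a ! * b !) := by
    rw [Nat.cast_choose ℝ (by omega : a ≤ n), show n - a = b by omega]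
  have hfa : (0:ℝ) < a ! := by exact_mod_cast Nat.factorial_pos a
  have hfb : (0:ℝ) < b ! := by exact_mod_cast Nat.factorial_pos b
  have hna : (0:ℝ) < a := by exact_mod_cast (by omega : 0 < a)
  have hnb : (0:ℝ) < b := by exact_mod_cast (by omega : 0 < b)
  have hnn : (0:ℝ) < n := by exact_mod_cast (by omega : 0 < n)
  have hfa' := fact_ub a ha
  have hfb' := fact_ub b hb
  have hfn' := fact_lb n (by omega)
  have hE32 := e4_le
  have hE : (0:ℝ) < exp 1 := exp_pos 1
  obtain ⟨E, hEq⟩ : ∃ E : ℝ, exp 1 = E := ⟨_, rfl⟩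
  rw [hEq] at hfa' hfb' hfn' hE32 hE
  have hsum : (a:ℝ) + b = n := by exact_mod_cast congrArg (Nat.cast : ℕ → ℝ) hab
  rw [hC]
  rw [div_mul_eq_mul_div, div_mul_eq_mul_div, div_mul_eq_mul_div, le_div_iff₀ (by positivity)]
  -- goal : n^n * (a! * b!) ≤ n! * a^a * b^b * √(2n)
  have hEn : E ^ n = E ^ a * E ^ b := by rw [← pow_add, hab]
  calc ((n:ℝ))^n * (a ! * b !)
      ≤ (n:ℝ)^n * ((E ^ 2 / 4 * (√(2*a) * ((a:ℝ)/E)^a)) *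
          (E ^ 2 / 4 * (√(2*b) * ((b:ℝ)/E)^b))) := by
        apply mul_le_mul_of_nonneg_left _ (by positivity)
        apply mul_le_mul hfa' hfb' hfb.le (by positivity)
    _ = ((n:ℝ)^n / E ^ n) * ((a:ℝ)^a * (b:ℝ)^b) *
          (√(2*a) * √(2*b) * E ^ 4 / 16) := by
        rw [div_pow, div_pow, hEn]
        field_simp
        ring
    _ ≤ ((n:ℝ)^n / E ^ n) * ((a:ℝ)^a * (b:ℝ)^b) * (2*(n:ℝ)*√π) := by
        apply mul_le_mul_of_nonneg_left _ (by positivity)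
        have h1 : √(2*(a:ℝ)) * √(2*(b:ℝ)) = √(4*((a:ℝ)*b)) := by
          rw [← Real.sqrt_mul (by positivity)]; ring_nf
        have h2 : √(4*((a:ℝ)*b)) ≤ (n:ℝ) := by
          rw [show ((n:ℝ)) = √((n:ℝ)^2) from (Real.sqrt_sq hnn.le).symm]
          apply Real.sqrt_le_sqrt
          nlinarith [sq_nonneg ((a:ℝ) - b)]
        calc √(2*(a:ℝ)) * √(2*(b:ℝ)) * E ^ 4 / 16 ≤ (n:ℝ) * (32*√π) / 16 := by
              apply div_le_div_of_nonneg_right _ (by norm_num)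
              calc √(2*(a:ℝ)) * √(2*(b:ℝ)) * E ^ 4 ≤ (n:ℝ) * E ^ 4 := by
                    apply mul_le_mul_of_nonneg_right _ (by positivity)
                    rw [h1]; exact h2
                _ ≤ (n:ℝ) * (32*√π) := mul_le_mul_of_nonneg_left hE32 hnn.le
          _ = 2*(n:ℝ)*√π := by ring
    _ = (√π * (√(2*n) * ((n:ℝ)/E)^n)) * ((a:ℝ)^a * (b:ℝ)^b * √(2*n)) := by
        rw [div_pow]
        have hsq : √(2*(n:ℝ)) ^ 2 = 2*(n:ℝ) :=
          Real.sq_sqrt (by positivity)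
        linear_combination (-(√π * ((n:ℝ)^n/E^n) * ((a:ℝ)^a*(b:ℝ)^b))) * hsq
    _ ≤ (n ! : ℝ) * ((a:ℝ)^a * (b:ℝ)^b * √(2*n)) := by
        apply mul_le_mul_of_nonneg_right hfn' (by positivity)
    _ = (n ! : ℝ) * (a:ℝ)^a * (b:ℝ)^b * √(2*n) := by ring

-- a = 1 case
lemma key1 (n b : ℕ) (hab : 1 + b = n) (hb : 1 ≤ b) :
    ((n:ℝ))^n ≤ (n.choose 1) * ((1:ℕ):ℝ)^(1:ℕ) * (b:ℝ)^b * √(2*(n:ℝ)) := by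
  subst hab
  rw [Nat.choose_one_right]
  have hbR : (1:ℝ) ≤ (b:ℝ) := by exact_mod_cast hb
  have hb0 : (0:ℝ) < (b:ℝ) := by linarith
  have hcast : ((1+b : ℕ):ℝ) = (b:ℝ) + 1 := by push_cast; ring
  rw [hcast]
  have hmain : ((b:ℝ)+1)^b ≤ (b:ℝ)^b * √(2*((b:ℝ)+1)) := by
    rcases Nat.lt_or_ge b 3 with hb3 | hb3
    · interval_cases b
      · -- b = 1 : 2 ≤ 1 * √4
        norm_num
      · -- b = 2 : 9 ≤ 4 * √6
        norm_num
        nlinarith [Real.sq_sqrt (by norm_num : (0:ℝ) ≤ 6), Real.sqrt_nonneg (6:ℝ),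
          Real.sqrt_le_sqrt (by norm_num : (6:ℝ) ≤ 9),
          Real.sqrt_le_sqrt (by norm_num : (4:ℝ) ≤ 6),
          Real.sqrt_sq (by norm_num : (0:ℝ) ≤ 2)]
    · -- b ≥ 3
      have h1 : ((b:ℝ)+1)^b = (b:ℝ)^b * (1 + 1/(b:ℝ))^b := by
        rw [← mul_pow]
        congr 1
        field_simp
      have h2 : (1 + 1/(b:ℝ))^b ≤ exp 1 := by
        calc (1 + 1/(b:ℝ))^b ≤ (exp (1/(b:ℝ)))^b := by
              apply pow_le_pow_left₀ (by positivity)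
              linarith [Real.add_one_le_exp (1/(b:ℝ))]
          _ = exp ((b:ℕ) * (1/(b:ℝ))) := by rw [← Real.exp_nat_mul]
          _ = exp 1 := by
              congr 1
              field_simp
      have h3 : exp 1 ≤ √(2*((b:ℝ)+1)) := by
        rw [show (2*((b:ℝ)+1)) = ((2*(b+1):ℕ):ℝ) by push_cast; ring]
        rw [← Real.sqrt_sq (exp_pos 1).le]
        apply Real.sqrt_le_sqrt
        have h9 : exp 1 < 2.7182818286 := Real.exp_one_lt_d9
        have hbb : (8:ℝ) ≤ ((2*(b+1):ℕ):ℝ) := by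
          have : (8:ℕ) ≤ 2*(b+1) := by omega
          exact_mod_cast this
        nlinarith [exp_pos 1]
      calc ((b:ℝ)+1)^b = (b:ℝ)^b * (1 + 1/(b:ℝ))^b := h1
        _ ≤ (b:ℝ)^b * exp 1 := by
            apply mul_le_mul_of_nonneg_left h2 (by positivity)
        _ ≤ (b:ℝ)^b * √(2*((b:ℝ)+1)) := by
            apply mul_le_mul_of_nonneg_left h3 (by positivity)
  calc ((b:ℝ)+1)^(1+b) = ((b:ℝ)+1) * ((b:ℝ)+1)^b := by rw [pow_add, pow_one]
    _ ≤ ((b:ℝ)+1) * ((b:ℝ)^b * √(2*((b:ℝ)+1))) := by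
        apply mul_le_mul_of_nonneg_left hmain (by positivity)
    _ = ((b:ℝ)+1) * ((1:ℕ):ℝ)^(1:ℕ) * (b:ℝ)^b * √(2*((b:ℝ)+1)) := by
        push_cast; ring

lemma keyfull (n a b : ℕ) (hab : a + b = n) (ha : 1 ≤ a) (hb : 1 ≤ b) :
    ((n:ℝ))^n ≤ (n.choose a) * (a:ℝ)^a * (b:ℝ)^b * √(2*(n:ℝ)) := by
  rcases Nat.lt_or_ge a 2 with ha2 | ha2
  · have ha1 : a = 1 := by omega
    subst ha1
    exact key1 n b hab hb
  rcases Nat.lt_or_ge b 2 with hb2 | hb2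
  · have hb1 : b = 1 := by omega
    subst hb1
    have hch : n.choose a = n.choose 1 := by
      rw [show a = n - 1 by omega]
      exact Nat.choose_symm (by omega)
    rw [hch]
    calc ((n:ℝ))^n ≤ (n.choose 1) * ((1:ℕ):ℝ)^(1:ℕ) * (a:ℝ)^a * √(2*(n:ℝ)) :=
          key1 n a (by omega) ha
      _ = (n.choose 1) * (a:ℝ)^a * ((1:ℕ):ℝ)^(1:ℕ) * √(2*(n:ℝ)) := by ring
  · exact key n a b hab ha2 hb2

end StirlingPart

section CombPart
open Real

def wt {t : ℕ} (v : Fin t → ZMod 2) : ℕ := (Finset.univ.filter (fun k => v k ≠ 0)).card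

lemma blockWeight_eq {t r : ℕ} (x : Fin t → Fin r → ZMod 2) :
    blockWeight x = ∑ i : Fin r, wt (fun k => x k i) := by
  simp only [blockWeight, wt, Finset.card_filter, Fintype.sum_prod_type]
  rw [Finset.sum_comm]

lemma wt_cast {t : ℕ} (v : Fin t → ZMod 2) :
    (∑ k, v k) = ((wt v : ℕ) : ZMod 2) := by
  have h : ∀ c : ZMod 2, c = if c ≠ 0 then ((1:ℕ):ZMod 2) else ((0:ℕ):ZMod 2) := by decide
  calc (∑ k, v k) = ∑ k, (((if v k ≠ 0 then (1:ℕ) else 0) : ℕ) : ZMod 2) := by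
        refine Finset.sum_congr rfl fun k _ => ?_
        rw [apply_ite (Nat.cast : ℕ → ZMod 2)]
        exact h (v k)
    _ = ((∑ k, if v k ≠ 0 then (1:ℕ) else 0 : ℕ) : ZMod 2) := by rw [Nat.cast_sum]
    _ = ((wt v : ℕ) : ZMod 2) := by rw [wt, Finset.card_filter]

lemma sum_eq_zero_iff_even {t : ℕ} (v : Fin t → ZMod 2) :
    (∑ k, v k) = 0 ↔ Even (wt v) := by
  rw [wt_cast, ZMod.natCast_eq_zero_iff, Nat.even_iff]
  omega

lemma sum_all {t : ℕ} (z : ℝ) :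
    ∑ v : Fin t → ZMod 2, z ^ wt v = (1 + z) ^ t := by
  have h : ∀ v : Fin t → ZMod 2, z ^ wt v = ∏ k, (if v k ≠ 0 then z else 1) := by
    intro v
    rw [wt, Finset.card_filter, ← Finset.prod_pow_eq_pow_sum]
    refine Finset.prod_congr rfl fun k _ => ?_
    split <;> simp
  calc ∑ v : Fin t → ZMod 2, z ^ wt v
      = ∑ v ∈ Fintype.piFinset (fun _ : Fin t => (univ : Finset (ZMod 2))),
          ∏ k, (if v k ≠ 0 then z else 1) := by
        rw [← Fintype.piFinset_univ]
        exact Finset.sum_congr rfl fun v _ => h v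
    _ = ∏ _k : Fin t, ∑ b : ZMod 2, (if b ≠ 0 then z else 1) := by
        rw [Finset.prod_univ_sum]
    _ = (1 + z) ^ t := by
        have hs : ∑ b : ZMod 2, (if b ≠ 0 then z else 1) = 1 + z := by
          rw [show (univ : Finset (ZMod 2)) = {0,1} from by decide]
          rw [Finset.sum_pair (by decide : (0:ZMod 2) ≠ 1)]
          rw [if_neg (by simp), if_pos (by decide)]
        rw [hs, Finset.prod_const, Finset.card_univ, Fintype.card_fin]

lemma sum_signed {t : ℕ} (z : ℝ) :
    ∑ v : Fin t → ZMod 2, (if (∑ k, v k) = 0 then (1:ℝ) else -1) * z ^ wt v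
      = (1 - z) ^ t := by
  have h : ∀ v : Fin t → ZMod 2,
      (if (∑ k, v k) = 0 then (1:ℝ) else -1) * z ^ wt v = (-z) ^ wt v := by
    intro v
    by_cases he : Even (wt v)
    · rw [if_pos ((sum_eq_zero_iff_even v).mpr he), he.neg_pow, one_mul]
    · rw [if_neg (fun hc => he ((sum_eq_zero_iff_even v).mp hc)),
        (Nat.not_even_iff_odd.mp he).neg_pow, neg_one_mul]
  rw [Finset.sum_congr rfl (fun v _ => h v), sum_all, ← sub_eq_add_neg]

noncomputable def F (t : ℕ) (z : ℝ) (b : ZMod 2) : ℝ :=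
  ∑ v ∈ Finset.univ.filter (fun v : Fin t → ZMod 2 => ∑ k, v k = b), z ^ wt v

lemma filter_ne_zero {t : ℕ} :
    Finset.univ.filter (fun v : Fin t → ZMod 2 => ¬ (∑ k, v k = 0))
      = Finset.univ.filter (fun v => ∑ k, v k = 1) := by
  apply Finset.filter_congr
  intro v _
  exact (by decide : ∀ c : ZMod 2, (¬ (c = 0)) ↔ c = 1) _

lemma F_add {t : ℕ} (z : ℝ) : F t z 0 + F t z 1 = (1 + z) ^ t := by
  rw [F, F, ← filter_ne_zero, Finset.sum_filter_add_sum_filter_not, sum_all]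

lemma F_sub {t : ℕ} (z : ℝ) : F t z 0 - F t z 1 = (1 - z) ^ t := by
  have h1 : ∑ v ∈ Finset.univ.filter (fun v : Fin t → ZMod 2 => ∑ k, v k = 0),
      (if (∑ k, v k) = 0 then (1:ℝ) else -1) * z ^ wt v = F t z 0 := by
    apply Finset.sum_congr rfl
    intro v hv
    rw [if_pos (Finset.mem_filter.mp hv).2, one_mul]
  have h2 : ∑ v ∈ Finset.univ.filter (fun v : Fin t → ZMod 2 => ¬ (∑ k, v k = 0)),
      (if (∑ k, v k) = 0 then (1:ℝ) else -1) * z ^ wt v = - F t z 1 := by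
    rw [F, ← filter_ne_zero, ← Finset.sum_neg_distrib]
    apply Finset.sum_congr rfl
    intro v hv
    rw [if_neg (Finset.mem_filter.mp hv).2, neg_one_mul]
  rw [← sum_signed (t := t) z,
    ← Finset.sum_filter_add_sum_filter_not Finset.univ (fun v : Fin t → ZMod 2 => ∑ k, v k = 0),
    h1, h2]
  ring

lemma F_le {t : ℕ} (z : ℝ) (b : ZMod 2) :
    F t z b ≤ ((1 + z) ^ t + |1 - z| ^ t) / 2 := by
  have ha := F_add (t := t) z
  have hs := F_sub (t := t) z
  have habs : (1 - z) ^ t ≤ |1 - z| ^ t := by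
    calc (1 - z) ^ t ≤ |(1 - z) ^ t| := le_abs_self _
      _ = |1 - z| ^ t := abs_pow _ _
  have habs' : -(|1 - z| ^ t) ≤ (1 - z) ^ t := by
    calc -(|1 - z| ^ t) = -|(1 - z) ^ t| := by rw [abs_pow]
      _ ≤ (1 - z) ^ t := neg_abs_le _
  rcases (by decide : ∀ c : ZMod 2, c = 0 ∨ c = 1) b with rfl | rfl
  · linarith
  · linarith

lemma syndrome_factorization {t r : ℕ} (z : ℝ) (s : Fin r → ZMod 2) :
    ∑ x ∈ Finset.univ.filter (fun x : Fin t → Fin r → ZMod 2 => blockSyndrome x = s),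
      z ^ blockWeight x = ∏ i : Fin r, F t z (s i) := by
  have hrhs : ∏ i : Fin r, F t z (s i)
      = ∑ p ∈ Fintype.piFinset (fun i => Finset.univ.filter
          (fun v : Fin t → ZMod 2 => ∑ k, v k = s i)), ∏ i, z ^ wt (p i) := by
    simp only [F]
    exact Finset.prod_univ_sum _ _
  rw [hrhs]
  refine Finset.sum_nbij' (fun x => fun i k => x k i) (fun y => fun k i => y i k)
    ?_ ?_ ?_ ?_ ?_
  · intro x hx
    rw [Fintype.mem_piFinset]
    intro i
    rw [Finset.mem_filter]
    exact ⟨Finset.mem_univ _, congrFun (Finset.mem_filter.mp hx).2 i⟩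
  · intro y hy
    rw [Finset.mem_filter]
    refine ⟨Finset.mem_univ _, ?_⟩
    funext i
    exact (Finset.mem_filter.mp (Fintype.mem_piFinset.mp hy i)).2
  · intros; rfl
  · intros; rfl
  · intro x hx
    rw [blockWeight_eq]
    exact (Finset.prod_pow_eq_pow_sum _ _ _).symm

end CombPart

section MainPart
open Real

/-- The number `N_w` of vectors of `F_2^{tr}` of Hamming weight exactly `w` with syndrome `s`
(for `H_{tr}` the concatenation of `t` copies of `I_r`) is at most
`√(2tr) ((1 + |1-2ω|^t)/2)^r C(tr, w)` where `ω = w/(tr)`. -/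
theorem count_weight_w_syndrome_le (r t w : ℕ) (hr : 0 < r) (ht : 0 < t)
    (hw : w ≤ t * r) (s : Fin r → ZMod 2) :
    ((Finset.univ.filter
        (fun x : Fin t → Fin r → ZMod 2 => blockWeight x = w ∧ blockSyndrome x = s)).card : ℝ) ≤
      Real.sqrt (2 * t * r) *
        ((1 + |1 - 2 * ((w : ℝ) / (t * r))| ^ t) / 2) ^ r * ((t * r).choose w) := by
  have hn0 : 0 < t * r := Nat.mul_pos ht hr
  have hnR : (0:ℝ) < ((t*r : ℕ) : ℝ) := by exact_mod_cast hn0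
  rw [show (2:ℝ) * ↑t * ↑r = 2 * ((t*r:ℕ):ℝ) by push_cast; ring,
      show (↑t * ↑r : ℝ) = ((t*r:ℕ):ℝ) by push_cast; ring]
  set n := t * r with hn
  have hsqrt1 : (1:ℝ) ≤ √(2*(n:ℝ)) := by
    rw [show (1:ℝ) = √1 by simp]
    apply Real.sqrt_le_sqrt
    have : (1:ℝ) ≤ (n:ℝ) := by exact_mod_cast hn0
    linarith
  -- degenerate cases
  by_cases hw0 : w = 0
  · subst hw0
    have hsub : (Finset.univ.filter
        (fun x : Fin t → Fin r → ZMod 2 => blockWeight x = 0 ∧ blockSyndrome x = s)).card ≤ 1 := by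
      apply Finset.card_le_one.mpr
      intro a ha b hb
      have ha0 : a = fun _ _ => 0 := by
        funext k i
        by_contra hne
        have : (k, i) ∈ Finset.univ.filter (fun q : Fin t × Fin r => a q.1 q.2 ≠ 0) :=
          Finset.mem_filter.mpr ⟨Finset.mem_univ _, hne⟩
        have := Finset.card_pos.mpr ⟨_, this⟩
        rw [show (Finset.univ.filter (fun q : Fin t × Fin r => a q.1 q.2 ≠ 0)).card
          = blockWeight a from rfl, (Finset.mem_filter.mp ha).2.1] at this
        exact absurd this (by norm_num)
      have hb0 : b = fun _ _ => 0 := by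
        funext k i
        by_contra hne
        have : (k, i) ∈ Finset.univ.filter (fun q : Fin t × Fin r => b q.1 q.2 ≠ 0) :=
          Finset.mem_filter.mpr ⟨Finset.mem_univ _, hne⟩
        have := Finset.card_pos.mpr ⟨_, this⟩
        rw [show (Finset.univ.filter (fun q : Fin t × Fin r => b q.1 q.2 ≠ 0)).card
          = blockWeight b from rfl, (Finset.mem_filter.mp hb).2.1] at this
        exact absurd this (by norm_num)
      rw [ha0, hb0]
    calc ((Finset.univ.filter
        (fun x : Fin t → Fin r → ZMod 2 => blockWeight x = 0 ∧ blockSyndrome x = s)).card : ℝ)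
        ≤ 1 := by exact_mod_cast hsub
      _ ≤ √(2*(n:ℝ)) * ((1 + |1 - 2 * ((0:ℕ) / (n:ℝ))| ^ t) / 2) ^ r * (n.choose 0) := by
          have hsqrt1' : (1:ℝ) ≤ √2 * √(n:ℝ) := by
            rw [← Real.sqrt_mul (by norm_num)]; exact hsqrt1
          simpa using hsqrt1'
      _ = √(2*(n:ℝ)) * ((1 + |1 - 2 * (((0:ℕ):ℝ) / (n:ℝ))| ^ t) / 2) ^ r * (n.choose 0) := by
          norm_num
  by_cases hwn : w = n
  · subst hwn
    have hsub : (Finset.univ.filter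
        (fun x : Fin t → Fin r → ZMod 2 => blockWeight x = n ∧ blockSyndrome x = s)).card ≤ 1 := by
      apply Finset.card_le_one.mpr
      intro a ha b hb
      have key1 : ∀ c : Fin t → Fin r → ZMod 2, blockWeight c = n → c = fun _ _ => 1 := by
        intro c hc
        have hcard : (Finset.univ : Finset (Fin t × Fin r)).card = n := by
          simp [hn]
        have hfil : Finset.univ.filter (fun q : Fin t × Fin r => c q.1 q.2 ≠ 0)
            = Finset.univ := by
          apply Finset.eq_of_subset_of_card_le (Finset.filter_subset _ _)
          rw [hcard, ← hc]
          exact le_of_eq rfl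
        funext k i
        have hmem : (k, i) ∈ Finset.univ.filter (fun q : Fin t × Fin r => c q.1 q.2 ≠ 0) := by
          rw [hfil]; exact Finset.mem_univ _
        have := (Finset.mem_filter.mp hmem).2
        exact (by decide : ∀ d : ZMod 2, d ≠ 0 → d = 1) _ this
      rw [key1 a (Finset.mem_filter.mp ha).2.1, key1 b (Finset.mem_filter.mp hb).2.1]
    have habs : |1 - 2 * (((n:ℕ):ℝ) / (n:ℝ))| = 1 := by
      rw [div_self hnR.ne']
      norm_num
    calc ((Finset.univ.filter
        (fun x : Fin t → Fin r → ZMod 2 => blockWeight x = n ∧ blockSyndrome x = s)).card : ℝ)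
        ≤ 1 := by exact_mod_cast hsub
      _ ≤ √(2*(n:ℝ)) * ((1 + |1 - 2 * (((n:ℕ):ℝ) / (n:ℝ))| ^ t) / 2) ^ r * (n.choose n) := by
          rw [habs, Nat.choose_self]
          have hsqrt1' : (1:ℝ) ≤ √2 * √(n:ℝ) := by
            rw [← Real.sqrt_mul (by norm_num)]; exact hsqrt1
          norm_num
          exact hsqrt1'
  · -- main case : 1 ≤ w ≤ n - 1
    have hw1 : 1 ≤ w := Nat.one_le_iff_ne_zero.mpr hw0
    have hwlt : w < n := lt_of_le_of_ne hw hwn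
    set m := n - w with hm
    have hm1 : 1 ≤ m := by omega
    have hwm : w + m = n := by omega
    have hwR : (0:ℝ) < (w:ℝ) := by exact_mod_cast hw1
    have hmR : (0:ℝ) < (m:ℝ) := by exact_mod_cast hm1
    set p : ℝ := (w:ℝ) / (n:ℝ) with hp
    set q : ℝ := (m:ℝ) / (n:ℝ) with hq
    have hpq : p + q = 1 := by
      rw [hp, hq, ← add_div,
        show (w:ℝ) + (m:ℝ) = (n:ℝ) by exact_mod_cast hwm]
      exact div_self hnR.ne'
    have hp0 : 0 < p := div_pos hwR hnR
    have hq0 : 0 < q := div_pos hmR hnR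
    set z : ℝ := p / q with hz
    have hz0 : 0 < z := div_pos hp0 hq0
    set D : ℝ := (1 + |1 - 2*p| ^ t) / 2 with hD
    have hD0 : (0:ℝ) ≤ D := by positivity
    set Sb := Finset.univ.filter
        (fun x : Fin t → Fin r → ZMod 2 => blockWeight x = w ∧ blockSyndrome x = s) with hSb
    set N := Sb.card with hNdef
    have h1z : 1 + z = 1/q := by
      rw [hz, eq_div_iff hq0.ne']
      field_simp
      linarith
    have habs1z : |1 - z| = |1 - 2*p| / q := by
      have h1 : 1 - z = (1 - 2*p)/q := by
        rw [hz, eq_div_iff hq0.ne']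
        field_simp
        linarith
      rw [h1, abs_div, abs_of_pos hq0]
    have hgen : ∀ A Q : ℝ, Q ≠ 0 → ((1/Q)^t + (A/Q)^t)/2 = (1/Q)^t * ((1 + A^t)/2) := by
      intro A Q hQ
      rw [div_pow, div_pow, one_pow]
      field_simp
    have hT : ((1+z)^t + |1-z|^t)/2 = (1/q)^t * D := by
      rw [h1z, habs1z, hD]
      exact hgen _ q hq0.ne'
    have hsub : Sb ⊆ Finset.univ.filter
        (fun x : Fin t → Fin r → ZMod 2 => blockSyndrome x = s) := by
      rw [hSb]
      exact Finset.monotone_filter_right _ (fun x _ hx => hx.2)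
    have hsum1 : ∑ x ∈ Sb, z ^ blockWeight x = (N:ℝ) * z ^ w := by
      rw [show ∑ x ∈ Sb, z ^ blockWeight x = ∑ x ∈ Sb, z ^ w from
        Finset.sum_congr rfl (fun x hx => by rw [((Finset.mem_filter.mp hx).2).1])]
      rw [Finset.sum_const, nsmul_eq_mul]
    have hprod : ∏ i : Fin r, F t z (s i) ≤ (((1+z)^t + |1-z|^t)/2)^r := by
      calc ∏ i : Fin r, F t z (s i)
          ≤ ∏ _i : Fin r, (((1+z)^t + |1-z|^t)/2) := by
            apply Finset.prod_le_prod
            · intro i _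
              apply Finset.sum_nonneg
              intro v _
              exact pow_nonneg hz0.le _
            · intro i _
              exact F_le z (s i)
        _ = (((1+z)^t + |1-z|^t)/2)^r := by
            rw [Finset.prod_const, Finset.card_univ, Fintype.card_fin]
    have hN : (N:ℝ) * z ^ w ≤ ((1/q)^t * D)^r := by
      calc (N:ℝ) * z^w = ∑ x ∈ Sb, z ^ blockWeight x := hsum1.symm
        _ ≤ ∑ x ∈ Finset.univ.filter
              (fun x : Fin t → Fin r → ZMod 2 => blockSyndrome x = s), z ^ blockWeight x :=
            Finset.sum_le_sum_of_subset_of_nonneg hsub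
              (fun x _ _ => pow_nonneg hz0.le _)
        _ = ∏ i : Fin r, F t z (s i) := syndrome_factorization z s
        _ ≤ (((1+z)^t + |1-z|^t)/2)^r := hprod
        _ = ((1/q)^t * D)^r := by rw [hT]
    have hmain1 : (N:ℝ) * (p^w * q^m) ≤ D^r := by
      have hzq : z^w * q^n = p^w * q^m := by
        rw [hz, div_pow, ← hwm, pow_add]
        field_simp
      have hmul := mul_le_mul_of_nonneg_right hN (le_of_lt (pow_pos hq0 n))
      calc (N:ℝ)*(p^w*q^m) = (N:ℝ)*z^w*q^n := by rw [mul_assoc, ← hzq]; try ring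
        _ ≤ ((1/q)^t * D)^r * q^n := hmul
        _ = D^r * ((1/q)^(t*r) * q^n) := by rw [mul_pow, ← pow_mul]; try ring
        _ = D^r := by
            rw [← hn, one_div, inv_pow, inv_mul_cancel₀ (pow_pos hq0 n).ne', mul_one]
    have hmain2 : (1:ℝ) ≤ √(2*(n:ℝ)) * (n.choose w) * (p^w * q^m) := by
      have hkey := keyfull n w m hwm hw1 hm1
      have hpw : p^w * q^m = ((w:ℝ)^w * (m:ℝ)^m) / (n:ℝ)^n := by
        rw [hp, hq, div_pow, div_pow, div_mul_div_comm, ← pow_add, hwm]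
      rw [hpw, show √(2*(n:ℝ)) * ((n.choose w):ℝ) * (((w:ℝ)^w * (m:ℝ)^m)/(n:ℝ)^n)
          = (√(2*(n:ℝ)) * ((n.choose w):ℝ) * ((w:ℝ)^w * (m:ℝ)^m))/(n:ℝ)^n by ring,
        le_div_iff₀ (pow_pos hnR n), one_mul]
      calc (n:ℝ)^n ≤ ((n.choose w):ℝ) * (w:ℝ)^w * (m:ℝ)^m * √(2*(n:ℝ)) := hkey
        _ = √(2*(n:ℝ)) * ((n.choose w):ℝ) * ((w:ℝ)^w * (m:ℝ)^m) := by ring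
    calc (N:ℝ) = (N:ℝ) * 1 := (mul_one _).symm
      _ ≤ (N:ℝ) * (√(2*(n:ℝ)) * (n.choose w) * (p^w * q^m)) :=
          mul_le_mul_of_nonneg_left hmain2 (Nat.cast_nonneg _)
      _ = ((N:ℝ) * (p^w * q^m)) * (√(2*(n:ℝ)) * (n.choose w)) := by ring
      _ ≤ D^r * (√(2*(n:ℝ)) * (n.choose w)) :=
          mul_le_mul_of_nonneg_right hmain1 (by positivity)
      _ = √(2*(n:ℝ)) * D^r * (n.choose w) := by ring

end MainPart
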